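/- Let M^n ⊂ R^{n+1}, n ≥ 2, be a smooth, closed, strictly convex hypersurface and let q ≥ 1. Then there exists a constant C = C(n, q) > 0 such that ∫_M ( ⎣Ric⎦ − (n−1) )_-^q dμ ≤ C · ∫_M ‖A − g‖^q dμ, where ⎣Ric⎦(x) denotes the smallest eigenvalue of the Ricci tensor of M at x and y_- = max(0, −y) for y ∈ R. -/

import Mathlib

/-- Abstract data of a smooth closed hypersurface `M ⊂ ℝ^{n+1}`: carrier space,
surface measure `vol`, embedding `X`, pointwise-ordered principal curvature
functions `κ`, and the first nonzero eigenvalue `lambda1` of the Laplace–Beltrami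
operator. All pointwise curvature tensors of the hypersurface (second fundamental
form, Ricci tensor, mean curvatures) are diagonal in a principal orthonormal
frame, so their pointwise norms are expressed through `κ`. -/
structure Hypersurface (n : ℕ) where
  M : Type
  [topM : TopologicalSpace M]
  [measM : MeasurableSpace M]
  [borelM : BorelSpace M]
  [compactM : CompactSpace M]
  [nonemptyM : Nonempty M]
  vol : MeasureTheory.Measure M
  [volFinite : MeasureTheory.IsFiniteMeasure vol]
  X : M → EuclideanSpace ℝ (Fin (n+1))
  X_cont : Continuous X
  X_inj : Function.Injective X
  κ : Fin n → M → ℝ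
  κ_cont : ∀ i, Continuous (κ i)
  κ_mono : ∀ x, Monotone fun i => κ i x
  lambda1 : ℝ
  lambda1_pos : 0 < lambda1

attribute [instance] Hypersurface.topM Hypersurface.measM Hypersurface.borelM
  Hypersurface.compactM Hypersurface.nonemptyM Hypersurface.volFinite

namespace Hypersurface

variable {n : ℕ} (S : Hypersurface n)

/-- The volume `|M|`. -/
noncomputable def area : ℝ := (S.vol Set.univ).toReal

/-- The normalized mean curvature `H = (κ₁ + ⋯ + κ_n)/n`. -/
noncomputable def H (x : S.M) : ℝ := (∑ i, S.κ i x) / n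

/-- The second normalized mean curvature `H₂`. -/
noncomputable def H2 (x : S.M) : ℝ :=
  ((n.choose 2 : ℝ))⁻¹ *
    ∑ s ∈ Finset.powersetCard 2 (Finset.univ : Finset (Fin n)), ∏ i ∈ s, S.κ i x

/-- Pointwise norm `‖A‖` of the second fundamental form. -/
noncomputable def normA (x : S.M) : ℝ := Real.sqrt (∑ i, (S.κ i x)^2)

/-- Pointwise norm `‖A⁻¹‖` of the inverse of the second fundamental form. -/
noncomputable def normAinv (x : S.M) : ℝ := Real.sqrt (∑ i, ((S.κ i x)⁻¹)^2)

/-- Pointwise norm `‖A - μ g‖`. -/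
noncomputable def normAsub (μ : ℝ) (x : S.M) : ℝ := Real.sqrt (∑ i, (S.κ i x - μ)^2)

/-- Pointwise norm `‖Å‖ = ‖A - H g‖` of the traceless second fundamental form. -/
noncomputable def normAring (x : S.M) : ℝ := Real.sqrt (∑ i, (S.κ i x - S.H x)^2)

/-- The eigenvalues of the Ricci tensor: by the Gauss equation `Ric = nH·A - A²`,
which is diagonal in a principal frame with eigenvalues `nHκᵢ - κᵢ²`. -/
noncomputable def ricEig (i : Fin n) (x : S.M) : ℝ := n * S.H x * S.κ i x - (S.κ i x)^2

/-- The smallest eigenvalue `⎣Ric⎦(x)` of the Ricci tensor. -/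
noncomputable def ricMin (x : S.M) : ℝ := ⨅ i, S.ricEig i x

/-- Pointwise norm `‖Ric - c g‖`. -/
noncomputable def normRicSub (c : ℝ) (x : S.M) : ℝ :=
  Real.sqrt (∑ i, (S.ricEig i x - c)^2)

/-- The `L^q` norm `‖f‖_q = (∫_M |f|^q)^{1/q}`. -/
noncomputable def Lq (q : ℝ) (f : S.M → ℝ) : ℝ := (∫ x, |f x| ^ q ∂S.vol) ^ (1/q)

/-- The `L^q` norm on a subset `Ω ⊂ M`. -/
noncomputable def LqOn (q : ℝ) (Ω : Set S.M) (f : S.M → ℝ) : ℝ :=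
  (∫ x in Ω, |f x| ^ q ∂S.vol) ^ (1/q)

/-- The sup norm `‖f‖_∞`. -/
noncomputable def supNorm (f : S.M → ℝ) : ℝ := ⨆ x, |f x|

/-- The center of mass `x₀ = |M|⁻¹ ∫_M X`. -/
noncomputable def centerOfMass : EuclideanSpace ℝ (Fin (n+1)) :=
  (S.area)⁻¹ • ∫ x, S.X x ∂S.vol

/-- Mean-convexity: `H > 0` everywhere. -/
def MeanConvex : Prop := ∀ x, 0 < S.H x

/-- Strict convexity: all principal curvatures positive (equivalently `κ₁ > 0`,
since the `κᵢ` are ordered). -/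
def StrictlyConvex : Prop := ∀ (x : S.M) (i : Fin n), 0 < S.κ i x

end Hypersurface

private lemma aux_ineq (m a S N : ℝ) (hm : 1 ≤ m) (ha : -1 < a) (hS : -m < S)
    (haN : |a| ≤ N) (hSN : |S| ≤ (m+1)*N) :
    -(m*a) - (1+a)*S ≤ 2*(m+1)*N := by
  obtain ⟨ha1, ha2⟩ := abs_le.mp haN
  obtain ⟨hS1, hS2⟩ := abs_le.mp hSN
  have hN : 0 ≤ N := le_trans (abs_nonneg a) haN
  rcases le_or_gt 0 S with h | h
  · nlinarith [mul_nonneg (by linarith : (0:ℝ) ≤ 1+a) h]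
  · rcases le_or_gt 0 a with h2 | h2
    · nlinarith [mul_nonpos_of_nonneg_of_nonpos h2 (by linarith : -S - m ≤ 0)]
    · nlinarith [mul_nonpos_of_nonpos_of_nonneg (le_of_lt h2) (by linarith : (0:ℝ) ≤ -S)]

private lemma pointwise_bound {n : ℕ} (hn : 2 ≤ n) (S : Hypersurface n)
    (hc : S.StrictlyConvex) (x : S.M) :
    max 0 (-(S.ricMin x - (n - 1))) ≤ 2 * n * S.normAsub 1 x := by
  have hN0 : 0 ≤ S.normAsub 1 x := Real.sqrt_nonneg _
  have hn0 : (0:ℝ) < n := by positivity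
  refine max_le (by positivity) ?_
  haveI : Nonempty (Fin n) := ⟨⟨0, by omega⟩⟩
  obtain ⟨i, hi⟩ := exists_eq_ciInf_of_finite (f := fun i => S.ricEig i x)
  rw [Hypersurface.ricMin, ← hi]
  set N := S.normAsub 1 x with hNdef
  set a : ℝ := S.κ i x - 1 with hadef
  set T : ℝ := ∑ j, S.κ j x with hTdef
  set Ssum : ℝ := T - n - a with hSdef
  have haN : |a| ≤ N := by
    rw [hadef, ← Real.sqrt_sq_eq_abs]
    exact Real.sqrt_le_sqrt (Finset.single_le_sum (f := fun j => (S.κ j x - 1)^2)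
      (fun j _ => sq_nonneg _) (Finset.mem_univ i))
  have hjN : ∀ j, |S.κ j x - 1| ≤ N := fun j => by
    rw [← Real.sqrt_sq_eq_abs]
    exact Real.sqrt_le_sqrt (Finset.single_le_sum (f := fun j => (S.κ j x - 1)^2)
      (fun j _ => sq_nonneg _) (Finset.mem_univ j))
  have hsum : (∑ j, (S.κ j x - 1)) = T - n := by
    rw [Finset.sum_sub_distrib]
    simp [hTdef]
  have hSsum : Ssum = ∑ j ∈ Finset.univ.erase i, (S.κ j x - 1) := by
    rw [Finset.sum_erase_eq_sub (Finset.mem_univ i), hsum, hSdef, hadef]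
  have hSN : |Ssum| ≤ ((n:ℝ) - 1 + 1) * N := by
    have : ((n:ℝ) - 1 + 1) * N = n * N := by ring
    rw [hSsum, this]
    calc |∑ j ∈ Finset.univ.erase i, (S.κ j x - 1)|
        ≤ ∑ j ∈ Finset.univ.erase i, |S.κ j x - 1| := Finset.abs_sum_le_sum_abs _ _
      _ ≤ ∑ j ∈ Finset.univ.erase i, N := Finset.sum_le_sum (fun j _ => hjN j)
      _ ≤ ∑ _j : Fin n, N := Finset.sum_le_sum_of_subset_of_nonneg
            (Finset.erase_subset _ _) (fun _ _ _ => hN0)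
      _ = n * N := by simp [mul_comm]
  have herase : (∑ j ∈ Finset.univ.erase i, S.κ j x) = T - S.κ i x :=
    Finset.sum_erase_eq_sub (Finset.mem_univ i)
  have hS : -((n:ℝ) - 1) < Ssum := by
    have hpos : 0 < ∑ j ∈ Finset.univ.erase i, S.κ j x := by
      refine Finset.sum_pos (fun j _ => hc x j) ?_
      rw [← Finset.card_pos, Finset.card_erase_of_mem (Finset.mem_univ i)]
      simp only [Finset.card_univ, Fintype.card_fin]
      omega
    rw [herase] at hpos
    rw [hSdef, hadef]
    linarith
  have hH : (n:ℝ) * S.H x = T := by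
    rw [Hypersurface.H]
    field_simp
    exact hTdef.symm
  have hric : S.ricEig i x - ((n:ℝ) - 1) = ((n:ℝ)-1)*a + (1+a)*Ssum := by
    rw [Hypersurface.ricEig, hH, hSdef, hadef]
    ring
  have hm : (1:ℝ) ≤ (n:ℝ) - 1 := by
    have : (2:ℝ) ≤ n := by exact_mod_cast hn
    linarith
  have ha : -1 < a := by
    have := hc x i
    rw [hadef]; linarith
  have key := aux_ineq ((n:ℝ)-1) a Ssum N hm ha hS haN hSN
  have heq : ((n:ℝ) - 1 + 1) = (n:ℝ) := by ring
  rw [heq] at key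
  linarith [hric, key]

/-- for `n ≥ 2` and `q ≥ 1` there is `C = C(n,q) > 0` such that on
every smooth, closed, strictly convex hypersurface `M^n ⊂ ℝ^{n+1}`,
`∫_M (⎣Ric⎦ − (n−1))_-^q dμ ≤ C · ∫_M ‖A − g‖^q dμ`, where `⎣Ric⎦(x)` is the
smallest eigenvalue of the Ricci tensor at `x` and `y_- = max(0, −y)`. -/
theorem ricci_defect_integral_estimate (n : ℕ) (hn : 2 ≤ n) (q : ℝ) (hq : 1 ≤ q) :
    ∃ C : ℝ, 0 < C ∧
      ∀ S : Hypersurface n, S.StrictlyConvex →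
        ∫ x, max 0 (-(S.ricMin x - (n - 1))) ^ q ∂S.vol ≤
          C * ∫ x, S.normAsub 1 x ^ q ∂S.vol := by
  refine ⟨(2*n)^q, Real.rpow_pos_of_pos (by positivity) q, fun S hc => ?_⟩
  have hNcont : Continuous (fun x => S.normAsub 1 x) := by
    apply Real.continuous_sqrt.comp
    exact continuous_finset_sum _ (fun i _ => ((S.κ_cont i).sub continuous_const).pow 2)
  have hgcont : Continuous (fun x => S.normAsub 1 x ^ q) :=
    hNcont.rpow_const (fun x => Or.inr (by linarith))
  have hgint : MeasureTheory.Integrable (fun x => S.normAsub 1 x ^ q) S.vol := by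
    rw [← MeasureTheory.integrableOn_univ]
    exact hgcont.continuousOn.integrableOn_compact' isCompact_univ MeasurableSet.univ
  have hq0 : 0 ≤ q := by linarith
  calc ∫ x, max 0 (-(S.ricMin x - (n - 1))) ^ q ∂S.vol
      ≤ ∫ x, (2*n)^q * (S.normAsub 1 x ^ q) ∂S.vol := by
        refine MeasureTheory.integral_mono_of_nonneg
          (Filter.Eventually.of_forall fun x => ?_) (hgint.const_mul _)
          (Filter.Eventually.of_forall fun x => ?_)
        · exact Real.rpow_nonneg (le_max_left _ _) q
        · have h0 : (0:ℝ) ≤ max 0 (-(S.ricMin x - (n - 1))) := le_max_left _ _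
          have hb := pointwise_bound hn S hc x
          have hN0 : 0 ≤ S.normAsub 1 x := Real.sqrt_nonneg _
          calc max 0 (-(S.ricMin x - (n - 1))) ^ q
              ≤ (2 * n * S.normAsub 1 x) ^ q := Real.rpow_le_rpow h0 hb hq0
            _ = (2*n)^q * S.normAsub 1 x ^ q := Real.mul_rpow (by positivity) hN0
    _ = (2*n)^q * ∫ x, S.normAsub 1 x ^ q ∂S.vol := MeasureTheory.integral_const_mul _ _
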